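/- Let n ≥ 2, a ∈ ℝ, and fix y ∈ ℝ^{n-1}. Define K : {x ∈ ℝⁿ : x_n ≠ 0} → ℝ by K(x) = |x_n|^{1-a} (|x'-y|² + x_n²)^{-(n-a)/2}, where x = (x', x_n). Then Δ_a K(x) = 0 for every x with x_n ≠ 0. -/

import Mathlib

/-- Directional derivative: `pd v u x = (fderiv ℝ u x) v`. -/
noncomputable def pd {E F : Type*} [NormedAddCommGroup E] [NormedSpace ℝ E]
    [NormedAddCommGroup F] [NormedSpace ℝ F] (v : E) (u : E → F) (x : E) : F :=
  fderiv ℝ u x v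

/-- The operator `Δ_a u = x_n² Δu + a x_n ∂u/∂x_n` on `ℝⁿ = ℝ^m × ℝ` (real valued). -/
noncomputable def deltaA (m : ℕ) (a : ℝ) (u : (Fin m → ℝ) × ℝ → ℝ)
    (x : (Fin m → ℝ) × ℝ) : ℝ :=
  x.2 ^ 2 *
      ((∑ j, pd (Pi.single j 1, (0 : ℝ)) (pd (Pi.single j 1, (0 : ℝ)) u) x)
        + pd ((0 : Fin m → ℝ), (1 : ℝ)) (pd ((0 : Fin m → ℝ), (1 : ℝ)) u) x)
    + a * x.2 * pd ((0 : Fin m → ℝ), (1 : ℝ)) u x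

/-- The Poisson kernel `K(x) = |x_n|^{1-a} (|x'-y|² + x_n²)^{-(n-a)/2}`. -/
noncomputable def kerK (n : ℕ) (a : ℝ) (y : Fin (n - 1) → ℝ)
    (x : (Fin (n - 1) → ℝ) × ℝ) : ℝ :=
  |x.2| ^ (1 - a) * ((∑ j, (x.1 j - y j) ^ 2) + x.2 ^ 2) ^ (-(((n : ℝ) - a) / 2))


open scoped BigOperators

noncomputable section S4aux

namespace S4aux

variable {m : ℕ}

/-- `Sf y x = |x' - y|^2 + x_n^2`. -/
def Sf (y : Fin m → ℝ) (x : (Fin m → ℝ) × ℝ) : ℝ :=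
  (∑ j, (x.1 j - y j) ^ 2) + x.2 ^ 2

/-- `G p q x = (x_n^2)^p * (Sf x)^q` (real powers). -/
def G (y : Fin m → ℝ) (p q : ℝ) (x : (Fin m → ℝ) × ℝ) : ℝ :=
  (x.2 ^ 2) ^ p * (Sf y x) ^ q

lemma sq_pos {x : (Fin m → ℝ) × ℝ} (hx : x.2 ≠ 0) : (0:ℝ) < x.2 ^ 2 :=
  lt_of_le_of_ne (sq_nonneg _) (Ne.symm (pow_ne_zero 2 hx))

lemma Sf_pos (y : Fin m → ℝ) {x : (Fin m → ℝ) × ℝ} (hx : x.2 ≠ 0) : 0 < Sf y x :=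
  add_pos_of_nonneg_of_pos (Finset.sum_nonneg fun _ _ => sq_nonneg _) (sq_pos hx)

/-- The derivative (as a CLM) of `Sf`. -/
def LS (y : Fin m → ℝ) (x : (Fin m → ℝ) × ℝ) : ((Fin m → ℝ) × ℝ) →L[ℝ] ℝ :=
  (∑ j, (2 * (x.1 j - y j)) •
      ((ContinuousLinearMap.proj j).comp (ContinuousLinearMap.fst ℝ (Fin m → ℝ) ℝ)))
    + (2 * x.2) • ContinuousLinearMap.snd ℝ (Fin m → ℝ) ℝ

lemma LS_apply_e (y : Fin m → ℝ) (x : (Fin m → ℝ) × ℝ) (j : Fin m) :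
    LS y x (Pi.single j 1, (0:ℝ)) = 2 * (x.1 j - y j) := by
  simp only [LS, ContinuousLinearMap.add_apply, ContinuousLinearMap.sum_apply,
    ContinuousLinearMap.smul_apply, ContinuousLinearMap.comp_apply,
    ContinuousLinearMap.coe_fst', ContinuousLinearMap.proj_apply,
    ContinuousLinearMap.coe_snd', smul_eq_mul]
  rw [Finset.sum_eq_single j]
  · simp
  · intro b _ hb; simp [Pi.single_apply, hb]
  · simp

lemma LS_apply_t (y : Fin m → ℝ) (x : (Fin m → ℝ) × ℝ) :
    LS y x ((0 : Fin m → ℝ), (1:ℝ)) = 2 * x.2 := by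
  simp [LS]

lemma hasFDerivAt_sq_snd (x : (Fin m → ℝ) × ℝ) :
    HasFDerivAt (fun z : (Fin m → ℝ) × ℝ => z.2 ^ 2)
      ((2 * x.2) • ContinuousLinearMap.snd ℝ (Fin m → ℝ) ℝ) x := by
  have h := (ContinuousLinearMap.snd ℝ (Fin m → ℝ) ℝ).hasFDerivAt (x := x)
  have h2 := h.fun_mul h
  simp only [ContinuousLinearMap.coe_snd'] at h2
  rw [show (fun z : (Fin m → ℝ) × ℝ => z.2 ^ 2) = fun i => i.2 * i.2 by
    funext z; simp [pow_two]]
  refine h2.congr_fderiv ?_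
  · ext v <;> simp [two_mul, mul_comm] <;> ring

lemma hasFDerivAt_Sf (y : Fin m → ℝ) (x : (Fin m → ℝ) × ℝ) :
    HasFDerivAt (Sf y) (LS y x) x := by
  have h1 : ∀ j : Fin m, HasFDerivAt (fun z : (Fin m → ℝ) × ℝ => (z.1 j - y j) ^ 2)
      ((2 * (x.1 j - y j)) •
        ((ContinuousLinearMap.proj j).comp (ContinuousLinearMap.fst ℝ (Fin m → ℝ) ℝ))) x := by
    intro j
    have hl : HasFDerivAt (fun z : (Fin m → ℝ) × ℝ => z.1 j - y j)
        ((ContinuousLinearMap.proj j).comp (ContinuousLinearMap.fst ℝ (Fin m → ℝ) ℝ)) x := by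
      have := ((ContinuousLinearMap.proj (R := ℝ) (φ := fun _ : Fin m => ℝ) j).comp
        (ContinuousLinearMap.fst ℝ (Fin m → ℝ) ℝ)).hasFDerivAt (x := x)
      exact this.sub_const (y j)
    have h2 := hl.fun_mul hl
    rw [show (fun z : (Fin m → ℝ) × ℝ => (z.1 j - y j) ^ 2)
        = fun i => (i.1 j - y j) * (i.1 j - y j) by funext z; simp [pow_two]]
    refine h2.congr_fderiv ?_
    · ext v <;> simp [two_mul] <;> ring
  have hsum : HasFDerivAt (fun z : (Fin m → ℝ) × ℝ => ∑ j, (z.1 j - y j) ^ 2)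
      (∑ j, (2 * (x.1 j - y j)) •
        ((ContinuousLinearMap.proj j).comp (ContinuousLinearMap.fst ℝ (Fin m → ℝ) ℝ))) x :=
    HasFDerivAt.fun_sum fun j _ => h1 j
  exact hsum.add (hasFDerivAt_sq_snd x)

lemma hasFDerivAt_G (y : Fin m → ℝ) (p q : ℝ) {x : (Fin m → ℝ) × ℝ} (hx : x.2 ≠ 0) :
    HasFDerivAt (G y p q)
      ((x.2 ^ 2) ^ p • ((q * Sf y x ^ (q - 1)) • LS y x)
        + Sf y x ^ q • ((p * (x.2 ^ 2) ^ (p - 1)) •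
            ((2 * x.2) • ContinuousLinearMap.snd ℝ (Fin m → ℝ) ℝ))) x := by
  have hTp : HasFDerivAt (fun z : (Fin m → ℝ) × ℝ => (z.2 ^ 2) ^ p)
      ((p * (x.2 ^ 2) ^ (p - 1)) • ((2 * x.2) • ContinuousLinearMap.snd ℝ (Fin m → ℝ) ℝ)) x :=
    (hasFDerivAt_sq_snd x).rpow_const (Or.inl (pow_ne_zero 2 hx))
  have hSq : HasFDerivAt (fun z : (Fin m → ℝ) × ℝ => Sf y z ^ q)
      ((q * Sf y x ^ (q - 1)) • LS y x) x :=
    (hasFDerivAt_Sf y x).rpow_const (Or.inl (Sf_pos y hx).ne')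
  exact hTp.mul hSq

lemma pd_G_e (y : Fin m → ℝ) (p q : ℝ) {x : (Fin m → ℝ) × ℝ} (hx : x.2 ≠ 0) (j : Fin m) :
    pd (Pi.single j 1, (0:ℝ)) (G y p q) x
      = 2 * q * (x.1 j - y j) * G y p (q - 1) x := by
  rw [pd, (hasFDerivAt_G y p q hx).fderiv]
  simp only [ContinuousLinearMap.add_apply, ContinuousLinearMap.smul_apply, smul_eq_mul,
    LS_apply_e, ContinuousLinearMap.coe_snd']
  simp only [G]
  ring

lemma pd_G_t (y : Fin m → ℝ) (p q : ℝ) {x : (Fin m → ℝ) × ℝ} (hx : x.2 ≠ 0) :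
    pd ((0 : Fin m → ℝ), (1:ℝ)) (G y p q) x
      = 2 * q * x.2 * G y p (q - 1) x + 2 * p * x.2 * G y (p - 1) q x := by
  rw [pd, (hasFDerivAt_G y p q hx).fderiv]
  simp only [ContinuousLinearMap.add_apply, ContinuousLinearMap.smul_apply, smul_eq_mul,
    LS_apply_t, ContinuousLinearMap.coe_snd']
  simp only [G]
  ring

lemma ev_ne (x : (Fin m → ℝ) × ℝ) (hx : x.2 ≠ 0) :
    ∀ᶠ z : (Fin m → ℝ) × ℝ in nhds x, z.2 ≠ 0 :=
  (isOpen_compl_singleton.preimage continuous_snd).mem_nhds hx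

lemma pd2_G_e (y : Fin m → ℝ) (p q : ℝ) {x : (Fin m → ℝ) × ℝ} (hx : x.2 ≠ 0) (j : Fin m) :
    pd (Pi.single j 1, (0:ℝ)) (pd (Pi.single j 1, (0:ℝ)) (G y p q)) x
      = 2 * q * (x.1 j - y j) * (2 * (q - 1) * (x.1 j - y j) * G y p (q - 2) x)
        + 2 * q * G y p (q - 1) x := by
  have heq : (fun z => pd (Pi.single j 1, (0:ℝ)) (G y p q) z)
      =ᶠ[nhds x] (fun z => (2 * q * (z.1 j - y j)) * G y p (q - 1) z) := by
    filter_upwards [ev_ne x hx] with z hz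
    rw [pd_G_e y p q hz j]
  have hlin : HasFDerivAt (fun z : (Fin m → ℝ) × ℝ => 2 * q * (z.1 j - y j))
      ((2 * q) • ((ContinuousLinearMap.proj j).comp (ContinuousLinearMap.fst ℝ (Fin m → ℝ) ℝ))) x := by
    have := ((ContinuousLinearMap.proj (R := ℝ) (φ := fun _ : Fin m => ℝ) j).comp
      (ContinuousLinearMap.fst ℝ (Fin m → ℝ) ℝ)).hasFDerivAt (x := x)
    exact (this.sub_const (y j)).const_mul (2 * q)
  have hmul := hlin.fun_mul (hasFDerivAt_G y p (q - 1) hx)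
  rw [pd, heq.fderiv_eq, hmul.fderiv]
  simp only [ContinuousLinearMap.add_apply, ContinuousLinearMap.smul_apply, smul_eq_mul,
    LS_apply_e, ContinuousLinearMap.coe_snd', ContinuousLinearMap.comp_apply,
    ContinuousLinearMap.coe_fst', ContinuousLinearMap.proj_apply]
  simp only [G, Pi.single_eq_same]
  have : q - 1 - 1 = q - 2 := by ring
  rw [this]
  ring

lemma pd2_G_t (y : Fin m → ℝ) (p q : ℝ) {x : (Fin m → ℝ) × ℝ} (hx : x.2 ≠ 0) :
    pd ((0 : Fin m → ℝ), (1:ℝ)) (pd ((0 : Fin m → ℝ), (1:ℝ)) (G y p q)) x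
      = 2 * q * x.2 * (2 * (q - 1) * x.2 * G y p (q - 2) x + 2 * p * x.2 * G y (p - 1) (q - 1) x)
        + 2 * q * G y p (q - 1) x
        + 2 * p * x.2 * (2 * q * x.2 * G y (p - 1) (q - 1) x + 2 * (p - 1) * x.2 * G y (p - 2) q x)
        + 2 * p * G y (p - 1) q x := by
  have heq : (fun z => pd ((0 : Fin m → ℝ), (1:ℝ)) (G y p q) z)
      =ᶠ[nhds x] (fun z => (2 * q * z.2) * G y p (q - 1) z + (2 * p * z.2) * G y (p - 1) q z) := by
    filter_upwards [ev_ne x hx] with z hz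
    rw [pd_G_t y p q hz]
  have hsnd : HasFDerivAt (fun z : (Fin m → ℝ) × ℝ => 2 * q * z.2)
      ((2 * q) • ContinuousLinearMap.snd ℝ (Fin m → ℝ) ℝ) x := by
    exact ((ContinuousLinearMap.snd ℝ (Fin m → ℝ) ℝ).hasFDerivAt (x := x)).const_mul (2 * q)
  have hsnd' : HasFDerivAt (fun z : (Fin m → ℝ) × ℝ => 2 * p * z.2)
      ((2 * p) • ContinuousLinearMap.snd ℝ (Fin m → ℝ) ℝ) x := by
    exact ((ContinuousLinearMap.snd ℝ (Fin m → ℝ) ℝ).hasFDerivAt (x := x)).const_mul (2 * p)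
  have hmul := (hsnd.fun_mul (hasFDerivAt_G y p (q - 1) hx)).fun_add
    (hsnd'.fun_mul (hasFDerivAt_G y (p - 1) q hx))
  rw [pd, heq.fderiv_eq, hmul.fderiv]
  simp only [ContinuousLinearMap.add_apply, ContinuousLinearMap.smul_apply, smul_eq_mul,
    LS_apply_t, ContinuousLinearMap.coe_snd']
  simp only [G]
  have h1 : q - 1 - 1 = q - 2 := by ring
  have h2 : p - 1 - 1 = p - 2 := by ring
  rw [h1, h2]
  ring

end S4aux

end S4aux

lemma rpow_step {b : ℝ} (hb : 0 < b) (r : ℝ) : b ^ r = b ^ (r - 1) * b := by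
  conv_lhs => rw [show r = (r - 1) + 1 by ring]
  rw [Real.rpow_add hb, Real.rpow_one]

lemma kerK_eq (n : ℕ) (a : ℝ) (y : Fin (n - 1) → ℝ) :
    kerK n a y = S4aux.G y ((1 - a) / 2) (-(((n : ℝ) - a) / 2)) := by
  funext z
  rw [kerK, S4aux.G, S4aux.Sf]
  congr 1
  rw [← sq_abs z.2, ← Real.rpow_natCast |z.2| 2, ← Real.rpow_mul (abs_nonneg _)]
  congr 1
  push_cast
  ring

/-- For every `x` with `x_n ≠ 0`, `Δ_a K(x) = 0`. -/
theorem statement4 (n : ℕ) (hn : 2 ≤ n) (a : ℝ) (y : Fin (n - 1) → ℝ)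
    (x : (Fin (n - 1) → ℝ) × ℝ) (hx : x.2 ≠ 0) :
    deltaA (n - 1) a (kerK n a y) x = 0 := by
  have hx2 : (0:ℝ) < x.2 ^ 2 := S4aux.sq_pos hx
  have hS : 0 < S4aux.Sf y x := S4aux.Sf_pos y hx
  have hcast : ((n - 1 : ℕ) : ℝ) = (n : ℝ) - 1 := by
    have h1 : 1 ≤ n := by omega
    push_cast [Nat.cast_sub h1]
    ring
  rw [deltaA, kerK_eq n a y]
  rw [Finset.sum_congr rfl
      (fun j _ => S4aux.pd2_G_e y ((1 - a) / 2) (-(((n : ℝ) - a) / 2)) hx j),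
    S4aux.pd2_G_t y ((1 - a) / 2) (-(((n : ℝ) - a) / 2)) hx,
    S4aux.pd_G_t y ((1 - a) / 2) (-(((n : ℝ) - a) / 2)) hx]
  rw [Finset.sum_add_distrib, Finset.sum_const, Finset.card_univ, Fintype.card_fin,
    nsmul_eq_mul, hcast]
  have hsum : ∑ j, 2 * (-(((n : ℝ) - a) / 2)) * (x.1 j - y j) *
        (2 * (-(((n : ℝ) - a) / 2) - 1) * (x.1 j - y j) *
          S4aux.G y ((1 - a) / 2) (-(((n : ℝ) - a) / 2) - 2) x)
      = (2 * (-(((n : ℝ) - a) / 2)) * (2 * (-(((n : ℝ) - a) / 2) - 1) *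
          S4aux.G y ((1 - a) / 2) (-(((n : ℝ) - a) / 2) - 2) x)) *
        ∑ j, (x.1 j - y j) ^ 2 := by
    rw [Finset.mul_sum]
    apply Finset.sum_congr rfl
    intro j _
    ring
  rw [hsum]
  simp only [S4aux.G]
  rw [rpow_step hx2 ((1 - a) / 2), rpow_step hx2 ((1 - a) / 2 - 1),
    rpow_step hS (-(((n : ℝ) - a) / 2)), rpow_step hS (-(((n : ℝ) - a) / 2) - 1),
    show ((1 - a) / 2 - 1 - 1 : ℝ) = (1 - a) / 2 - 2 by ring,
    show (-(((n : ℝ) - a) / 2) - 1 - 1 : ℝ) = -(((n : ℝ) - a) / 2) - 2 by ring]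
  simp only [S4aux.Sf]
  ring
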